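/- Under the general pressure law hypotheses there exist a constant C ≥ 1 and a threshold ρ₀ ∈ (0, ρ⋆] such that for all ρ ∈ (0, ρ₀]: C⁻¹ρ^{θ₁} ≤ K(ρ) ≤ Cρ^{θ₁}, where θ₁ = (γ₁−1)/2. -/

import Mathlib

open Real Set
open MeasureTheory

/-- General pressure law hypotheses: `P ∈ C¹([0,∞)) ∩ C⁴((0,∞))`, strict hyperbolicity and
genuine nonlinearity for `ρ > 0`, and power-law expansions near the vacuum and the far field. -/
structure GeneralPressureLaw (P : ℝ → ℝ) (ρs ρS γ₁ γ₂ κ₁ κ₂ b Cs CS : ℝ) : Prop where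
  ρs_pos : 0 < ρs
  ρs_lt_ρS : ρs < ρS
  one_lt_γ₂ : 1 < γ₂
  γ₂_le_γ₁ : γ₂ ≤ γ₁
  γ₁_lt_three : γ₁ < 3
  κ₁_pos : 0 < κ₁
  κ₂_pos : 0 < κ₂
  b_pos : 0 < b
  Cs_pos : 0 < Cs
  CS_pos : 0 < CS
  smooth_C1 : ContDiffOn ℝ 1 P (Ici 0)
  smooth_C4 : ContDiffOn ℝ 4 P (Ioi 0)
  deriv_pos : ∀ ρ : ℝ, 0 < ρ → 0 < deriv P ρ
  genuinely_nonlinear : ∀ ρ : ℝ, 0 < ρ → 0 < 2 * deriv P ρ + ρ * deriv (deriv P) ρ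
  expansion : ∃ P₁ P₂ : ℝ → ℝ,
    ContDiffOn ℝ 4 P₁ (Ioi 0) ∧ ContDiffOn ℝ 4 P₂ (Ioi 0) ∧
    (∀ ρ : ℝ, 0 ≤ ρ → ρ < ρs → P ρ = κ₁ * ρ ^ γ₁ * (1 + P₁ ρ)) ∧
    (∀ ρ : ℝ, ρS ≤ ρ → P ρ = κ₂ * ρ ^ γ₂ * (1 + P₂ ρ)) ∧
    (∀ n : ℕ, n ≤ 4 → ∀ ρ : ℝ, 0 < ρ → ρ < ρs →
      |iteratedDeriv n P₁ ρ| ≤ Cs * ρ ^ (γ₁ - 1 - (n : ℝ))) ∧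
    (∀ n : ℕ, n ≤ 4 → ∀ ρ : ℝ, ρS ≤ ρ →
      |iteratedDeriv n P₂ ρ| ≤ CS * ρ ^ (-b - (n : ℝ)))

/-- The internal energy `e(ρ) = ∫₀^ρ P(y)/y² dy`. -/
noncomputable def internalEnergy (P : ℝ → ℝ) (ρ : ℝ) : ℝ := ∫ y in (0:ℝ)..ρ, P y / y ^ 2

/-- The function `K(ρ) = ∫₀^ρ √(P'(y))/y dy`. -/
noncomputable def Kfun (P : ℝ → ℝ) (ρ : ℝ) : ℝ := ∫ y in (0:ℝ)..ρ, Real.sqrt (deriv P y) / y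

private lemma arith_deriv_bnd (κ₁ γ₁ δ Cs a s t u v : ℝ)
    (hκ : 0 < κ₁) (hγ : 1 < γ₁) (ha : 0 < a) (hs : 0 < s) (ht : 0 < t)
    (hts : t * s = a * a) (hCsa : Cs * a ≤ δ) (hCs : 0 < Cs)
    (hδeq : (γ₁ + 1) * δ = γ₁ / 2) (hδpos : 0 < δ)
    (hu : |u| ≤ Cs * a) (hv : |v| ≤ Cs * s) :
    κ₁ * γ₁ / 2 * a ≤ κ₁ * (γ₁ * a * (1 + u) + t * v) ∧
      κ₁ * (γ₁ * a * (1 + u) + t * v) ≤ 2 * κ₁ * γ₁ * a := by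
  obtain ⟨hu1, hu2⟩ := abs_le.mp hu
  obtain ⟨hv1, hv2⟩ := abs_le.mp hv
  have htv1 : -(Cs * (a * a)) ≤ t * v := by nlinarith [mul_le_mul_of_nonneg_left hv1 ht.le]
  have htv2 : t * v ≤ Cs * (a * a) := by nlinarith [mul_le_mul_of_nonneg_left hv2 ht.le]
  have hCsaa : Cs * (a * a) ≤ δ * a := by nlinarith [mul_le_mul_of_nonneg_right hCsa ha.le]
  have hua1 : -δ ≤ u := by nlinarith
  have hua2 : u ≤ δ := by nlinarith
  have hgapos : (0:ℝ) < γ₁ * a := mul_pos (by linarith) ha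
  have hw1 := mul_le_mul_of_nonneg_left hua1 hgapos.le
  have hw2 := mul_le_mul_of_nonneg_left hua2 hgapos.le
  constructor
  · have hinner : γ₁ / 2 * a ≤ γ₁ * a * (1 + u) + t * v := by nlinarith
    have := mul_le_mul_of_nonneg_left hinner hκ.le
    linarith [(by ring : κ₁ * (γ₁ / 2 * a) = κ₁ * γ₁ / 2 * a)]
  · have hinner : γ₁ * a * (1 + u) + t * v ≤ 2 * γ₁ * a := by nlinarith
    have := mul_le_mul_of_nonneg_left hinner hκ.le
    linarith [(by ring : κ₁ * (2 * γ₁ * a) = 2 * κ₁ * γ₁ * a)]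


/-- Under the general pressure law hypotheses, near the vacuum `K(ρ)` is comparable to
`ρ^{θ₁}` with `θ₁ = (γ₁ - 1)/2`. -/
theorem K_bounds_near_vacuum
    (P : ℝ → ℝ) (ρs ρS γ₁ γ₂ κ₁ κ₂ b Cs CS : ℝ)
    (h : GeneralPressureLaw P ρs ρS γ₁ γ₂ κ₁ κ₂ b Cs CS) :
    ∃ C : ℝ, 1 ≤ C ∧ ∃ ρ₀ : ℝ, 0 < ρ₀ ∧ ρ₀ ≤ ρs ∧
      ∀ ρ : ℝ, 0 < ρ → ρ ≤ ρ₀ →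
        C⁻¹ * ρ ^ ((γ₁ - 1) / 2) ≤ Kfun P ρ ∧ Kfun P ρ ≤ C * ρ ^ ((γ₁ - 1) / 2) := by
  obtain ⟨P₁, P₂, hP₁s, -, hexp, -, hbound, -⟩ := h.expansion
  have hγ1 : 1 < γ₁ := lt_of_lt_of_le h.one_lt_γ₂ h.γ₂_le_γ₁
  have hγ3 : γ₁ < 3 := h.γ₁_lt_three
  set θ : ℝ := (γ₁ - 1) / 2 with hθ
  have hθpos : 0 < θ := by rw [hθ]; linarith
  have hθlt1 : θ < 1 := by rw [hθ]; linarith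
  set δ : ℝ := γ₁ / (2 * (γ₁ + 1)) with hδ
  have hδpos : 0 < δ := by
    apply div_pos <;> linarith
  have hδeq : (γ₁ + 1) * δ = γ₁ / 2 := by
    rw [hδ]; field_simp
  have hδhalf : δ < 1 / 2 := by
    rw [hδ, div_lt_div_iff₀ (by linarith) (by norm_num)]; linarith
  set ρ₀ : ℝ := min (ρs / 2) ((δ / Cs) ^ ((γ₁ - 1)⁻¹)) with hρ₀
  have hρ₀pos : 0 < ρ₀ := by
    apply lt_min (by linarith [h.ρs_pos])
    exact Real.rpow_pos_of_pos (div_pos hδpos h.Cs_pos) _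
  have hρ₀le : ρ₀ ≤ ρs := le_trans (min_le_left _ _) (by linarith [h.ρs_pos])
  have hlt_ρs : ∀ y : ℝ, 0 < y → y ≤ ρ₀ → y < ρs := fun y hy hyρ₀ =>
    lt_of_le_of_lt (le_trans hyρ₀ (min_le_left _ _)) (by linarith [h.ρs_pos])
  have hsmall : ∀ y : ℝ, 0 < y → y ≤ ρ₀ → Cs * y ^ (γ₁ - 1) ≤ δ := by
    intro y hy hyρ₀
    have h1 : y ^ (γ₁ - 1) ≤ ((δ / Cs) ^ ((γ₁ - 1)⁻¹)) ^ (γ₁ - 1) :=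
      Real.rpow_le_rpow hy.le (le_trans hyρ₀ (min_le_right _ _)) (by linarith)
    rw [Real.rpow_inv_rpow (div_pos hδpos h.Cs_pos).le (by linarith)] at h1
    calc Cs * y ^ (γ₁ - 1) ≤ Cs * (δ / Cs) :=
          mul_le_mul_of_nonneg_left h1 h.Cs_pos.le
      _ = δ := mul_div_cancel₀ _ h.Cs_pos.ne'
  -- derivative formula
  have hderivP : ∀ y : ℝ, 0 < y → y < ρs →
      deriv P y = κ₁ * (γ₁ * y ^ (γ₁ - 1) * (1 + P₁ y) + y ^ γ₁ * deriv P₁ y) := by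
    intro y hy hys
    have heq : P =ᶠ[nhds y] fun x => κ₁ * x ^ γ₁ * (1 + P₁ x) :=
      Filter.eventuallyEq_of_mem (Ioo_mem_nhds hy hys) fun x hx => hexp x hx.1.le hx.2
    have hdiffP₁ : DifferentiableAt ℝ P₁ y :=
      (hP₁s.differentiableOn (by norm_num)).differentiableAt (isOpen_Ioi.mem_nhds hy)
    have h1 : HasDerivAt (fun x : ℝ => x ^ γ₁) (γ₁ * y ^ (γ₁ - 1)) y :=
      Real.hasDerivAt_rpow_const (Or.inl hy.ne')
    have h2 : HasDerivAt (fun x => 1 + P₁ x) (deriv P₁ y) y :=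
      hdiffP₁.hasDerivAt.const_add 1
    have h3 : HasDerivAt (fun x : ℝ => κ₁ * x ^ γ₁ * (1 + P₁ x))
        (κ₁ * (γ₁ * y ^ (γ₁ - 1) * (1 + P₁ y) + y ^ γ₁ * deriv P₁ y)) y := by
      have : HasDerivAt (fun x : ℝ => κ₁ * x ^ γ₁ * (1 + P₁ x)) _ y := (h1.const_mul κ₁).mul h2
      convert this using 1
      ring
    rw [heq.deriv_eq, h3.deriv]
  -- two-sided bounds on deriv P
  have hbnd : ∀ y : ℝ, 0 < y → y ≤ ρ₀ →
      κ₁ * γ₁ / 2 * y ^ (γ₁ - 1) ≤ deriv P y ∧ deriv P y ≤ 2 * κ₁ * γ₁ * y ^ (γ₁ - 1) := by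
    intro y hy hyρ₀
    have hys := hlt_ρs y hy hyρ₀
    rw [hderivP y hy hys]
    have h0 := hbound 0 (by norm_num) y hy hys
    simp only [iteratedDeriv_zero, Nat.cast_zero, sub_zero] at h0
    have h1 := hbound 1 (by norm_num) y hy hys
    simp only [iteratedDeriv_one, Nat.cast_one] at h1
    have hapos : 0 < y ^ (γ₁ - 1) := Real.rpow_pos_of_pos hy _
    have hspos : 0 < y ^ (γ₁ - 1 - 1) := Real.rpow_pos_of_pos hy _
    have htpos : 0 < y ^ γ₁ := Real.rpow_pos_of_pos hy _
    have hts : y ^ γ₁ * y ^ (γ₁ - 1 - 1) = y ^ (γ₁ - 1) * y ^ (γ₁ - 1) := by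
      rw [← Real.rpow_add hy, ← Real.rpow_add hy]
      ring_nf
    exact arith_deriv_bnd κ₁ γ₁ δ Cs (y ^ (γ₁ - 1)) (y ^ (γ₁ - 1 - 1)) (y ^ γ₁)
      (P₁ y) (deriv P₁ y) h.κ₁_pos hγ1 hapos hspos htpos hts
      (hsmall y hy hyρ₀) h.Cs_pos hδeq hδpos h0 h1
  set m : ℝ := κ₁ * γ₁ / 2 with hm'
  set M : ℝ := 2 * κ₁ * γ₁ with hM'
  have hmpos : 0 < m := div_pos (mul_pos h.κ₁_pos (by linarith)) two_pos
  have hMpos : 0 < M := by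
    have := h.κ₁_pos
    rw [hM']
    nlinarith
  have hmM : m ≤ M := by
    have := h.κ₁_pos
    rw [hm', hM']
    nlinarith
  -- pointwise bounds on the integrand over Icc 0 ρ₀
  have hfb : ∀ y : ℝ, 0 ≤ y → y ≤ ρ₀ →
      Real.sqrt m * y ^ (θ - 1) ≤ Real.sqrt (deriv P y) / y ∧
        Real.sqrt (deriv P y) / y ≤ Real.sqrt M * y ^ (θ - 1) := by
    intro y hy0 hyρ₀
    rcases eq_or_lt_of_le hy0 with hy | hy
    · rw [← hy, div_zero, Real.zero_rpow (by linarith : θ - 1 ≠ 0), mul_zero]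
      simp
    · obtain ⟨hb1, hb2⟩ := hbnd y hy hyρ₀
      have hsq : Real.sqrt (y ^ (γ₁ - 1)) = y ^ θ := by
        rw [Real.sqrt_eq_rpow, ← Real.rpow_mul hy.le, hθ]
        ring_nf
      have hyd : y ^ θ / y = y ^ (θ - 1) := by
        rw [Real.rpow_sub hy, Real.rpow_one]
      constructor
      · have h1 : Real.sqrt (m * y ^ (γ₁ - 1)) ≤ Real.sqrt (deriv P y) :=
          Real.sqrt_le_sqrt hb1
        rw [Real.sqrt_mul hmpos.le, hsq] at h1
        calc Real.sqrt m * y ^ (θ - 1) = Real.sqrt m * y ^ θ / y := by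
              rw [mul_div_assoc, hyd]
          _ ≤ Real.sqrt (deriv P y) / y := by gcongr
      · have h1 : Real.sqrt (deriv P y) ≤ Real.sqrt (M * y ^ (γ₁ - 1)) :=
          Real.sqrt_le_sqrt hb2
        rw [Real.sqrt_mul hMpos.le, hsq] at h1
        calc Real.sqrt (deriv P y) / y ≤ Real.sqrt M * y ^ θ / y := by gcongr
          _ = Real.sqrt M * y ^ (θ - 1) := by rw [mul_div_assoc, hyd]
  have hderivcont : ContinuousOn (deriv P) (Ioi 0) :=
    h.smooth_C4.continuousOn_deriv_of_isOpen isOpen_Ioi (by norm_num)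
  have hc1 : 0 < Real.sqrt m / θ := div_pos (Real.sqrt_pos.mpr hmpos) hθpos
  set C := max (max (Real.sqrt M / θ) ((Real.sqrt m / θ)⁻¹)) 1 with hC
  refine ⟨C, le_max_right _ _, ρ₀, hρ₀pos, hρ₀le, ?_⟩
  intro ρ hρ hρρ₀
  have hrint : IntervalIntegrable (fun y : ℝ => y ^ (θ - 1)) volume 0 ρ :=
    intervalIntegral.intervalIntegrable_rpow' (by linarith)
  have hgint : IntervalIntegrable (fun y : ℝ => Real.sqrt M * y ^ (θ - 1)) volume 0 ρ :=
    hrint.const_mul _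
  have hg'int : IntervalIntegrable (fun y : ℝ => Real.sqrt m * y ^ (θ - 1)) volume 0 ρ :=
    hrint.const_mul _
  have hfcont : ContinuousOn (fun y : ℝ => Real.sqrt (deriv P y) / y) (Ioc 0 ρ) := by
    apply ContinuousOn.div
    · exact Real.continuous_sqrt.comp_continuousOn (hderivcont.mono (fun x hx => hx.1))
    · exact continuousOn_id
    · exact fun x hx => ne_of_gt hx.1
  have hfint : IntervalIntegrable (fun y : ℝ => Real.sqrt (deriv P y) / y) volume 0 ρ := by
    rw [intervalIntegrable_iff_integrableOn_Ioc_of_le hρ.le]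
    refine Integrable.mono' ((intervalIntegrable_iff_integrableOn_Ioc_of_le hρ.le).mp hgint)
      (hfcont.aestronglyMeasurable measurableSet_Ioc) ?_
    rw [ae_restrict_iff' measurableSet_Ioc]
    refine Filter.Eventually.of_forall fun y hy => ?_
    rw [Real.norm_eq_abs, abs_of_nonneg (div_nonneg (Real.sqrt_nonneg _) hy.1.le)]
    exact (hfb y hy.1.le (hy.2.trans hρρ₀)).2
  have hval : (∫ y in (0:ℝ)..ρ, y ^ (θ - 1)) = ρ ^ θ / θ := by
    rw [integral_rpow (Or.inl (by linarith))]
    rw [show θ - 1 + 1 = θ by ring, Real.zero_rpow hθpos.ne', sub_zero]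
  have hlow : Real.sqrt m / θ * ρ ^ θ ≤ Kfun P ρ := by
    have hmono := intervalIntegral.integral_mono_on hρ.le hg'int hfint
      (fun x hx => (hfb x hx.1 (hx.2.trans hρρ₀)).1)
    rw [intervalIntegral.integral_const_mul, hval] at hmono
    unfold Kfun
    calc Real.sqrt m / θ * ρ ^ θ = Real.sqrt m * (ρ ^ θ / θ) := by ring
      _ ≤ _ := hmono
  have hup : Kfun P ρ ≤ Real.sqrt M / θ * ρ ^ θ := by
    have hmono := intervalIntegral.integral_mono_on hρ.le hfint hgint
      (fun x hx => (hfb x hx.1 (hx.2.trans hρρ₀)).2)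
    rw [intervalIntegral.integral_const_mul, hval] at hmono
    unfold Kfun
    calc (∫ y in (0:ℝ)..ρ, Real.sqrt (deriv P y) / y) ≤ Real.sqrt M * (ρ ^ θ / θ) := hmono
      _ = Real.sqrt M / θ * ρ ^ θ := by ring
  have hrρnn : 0 ≤ ρ ^ θ := (Real.rpow_pos_of_pos hρ θ).le
  have hCinv : C⁻¹ ≤ Real.sqrt m / θ := by
    have h1 : (Real.sqrt m / θ)⁻¹ ≤ C := le_trans (le_max_right _ _) (le_max_left _ _)
    calc C⁻¹ ≤ ((Real.sqrt m / θ)⁻¹)⁻¹ := inv_anti₀ (inv_pos.mpr hc1) h1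
      _ = _ := inv_inv _
  have hCM : Real.sqrt M / θ ≤ C := le_trans (le_max_left _ _) (le_max_left _ _)
  constructor
  · calc C⁻¹ * ρ ^ θ ≤ Real.sqrt m / θ * ρ ^ θ := mul_le_mul_of_nonneg_right hCinv hrρnn
      _ ≤ Kfun P ρ := hlow
  · calc Kfun P ρ ≤ Real.sqrt M / θ * ρ ^ θ := hup
      _ ≤ C * ρ ^ θ := mul_le_mul_of_nonneg_right hCM hrρnn
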